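/- The function h(u) = (u - 1)/√(2(u - 1 - ln u)) for u ≠ 1 (extended by continuity at u = 1) is monotone increasing on (0, ∞). -/

import Mathlib

open Real

noncomputable def fF : ℝ → ℝ := fun u => (u-1)^2 / (2*(u-1-Real.log u))

lemma key_pos {u : ℝ} (hu : 0 < u) (h1 : u ≠ 1) : 0 < u - 1 - Real.log u := by
  have := Real.log_lt_sub_one_of_pos hu h1
  linarith

lemma ell_hasDeriv {u : ℝ} (hu : 0 < u) :
    HasDerivAt (fun x : ℝ => x - x⁻¹ - 2*Real.log x) ((1 - u⁻¹)^2) u := by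
  have h := ((hasDerivAt_id u).sub (hasDerivAt_inv (ne_of_gt hu))).sub
    ((Real.hasDerivAt_log (ne_of_gt hu)).const_mul 2)
  convert h using 1 <;> try rfl
  field_simp
  ring

lemma ell_mono : MonotoneOn (fun u : ℝ => u - u⁻¹ - 2*Real.log u) (Set.Ioi 0) := by
  apply monotoneOn_of_deriv_nonneg (convex_Ioi 0)
  · intro x hx
    exact ((ell_hasDeriv hx).continuousAt).continuousWithinAt
  · intro x hx
    rw [interior_Ioi] at hx
    exact (ell_hasDeriv hx).differentiableAt.differentiableWithinAt
  · intro x hx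
    rw [interior_Ioi] at hx
    rw [(ell_hasDeriv hx).deriv]
    positivity

lemma ell_nonneg {u : ℝ} (hu : 1 ≤ u) : 0 ≤ u - u⁻¹ - 2*Real.log u := by
  have := ell_mono (Set.mem_Ioi.2 one_pos) (Set.mem_Ioi.2 (lt_of_lt_of_le one_pos hu)) hu
  simpa using this

lemma ell_nonpos {u : ℝ} (hu : 0 < u) (hu1 : u ≤ 1) : u - u⁻¹ - 2*Real.log u ≤ 0 := by
  have := ell_mono (Set.mem_Ioi.2 hu) (Set.mem_Ioi.2 one_pos) hu1
  simpa using this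

lemma psi_hasDeriv {u : ℝ} (hu : 0 < u) :
    HasDerivAt (fun x : ℝ => x^2 - 4*x + 3 + 2*Real.log x) (2*(u-1)^2/u) u := by
  have h := ((((hasDerivAt_pow 2 u).sub ((hasDerivAt_id u).const_mul 4)).add_const 3).add
    ((Real.hasDerivAt_log (ne_of_gt hu)).const_mul 2))
  convert h using 1 <;> try rfl
  field_simp
  ring

lemma psi_mono : MonotoneOn (fun u : ℝ => u^2 - 4*u + 3 + 2*Real.log u) (Set.Ioi 0) := by
  apply monotoneOn_of_deriv_nonneg (convex_Ioi 0)
  · intro x hx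
    exact ((psi_hasDeriv hx).continuousAt).continuousWithinAt
  · intro x hx
    rw [interior_Ioi] at hx
    exact (psi_hasDeriv hx).differentiableAt.differentiableWithinAt
  · intro x hx
    rw [interior_Ioi] at hx
    rw [(psi_hasDeriv hx).deriv]
    exact div_nonneg (by positivity) (le_of_lt hx)

lemma psi_le {u : ℝ} (hu : 0 < u) (hu1 : u ≤ 1) : (u-1)^2 ≤ 2*(u-1-Real.log u) := by
  have := psi_mono (Set.mem_Ioi.2 hu) (Set.mem_Ioi.2 one_pos) hu1
  simp only [Real.log_one] at this
  nlinarith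

lemma psi_ge {u : ℝ} (hu : 1 ≤ u) : 2*(u-1-Real.log u) ≤ (u-1)^2 := by
  have := psi_mono (Set.mem_Ioi.2 one_pos) (Set.mem_Ioi.2 (lt_of_lt_of_le one_pos hu)) hu
  simp only [Real.log_one] at this
  nlinarith

lemma fF_hasDeriv {u : ℝ} (hu : 0 < u) (h1 : u ≠ 1) :
    HasDerivAt fF (2*(u-1)*(u - u⁻¹ - 2*Real.log u) / (2*(u-1-Real.log u))^2) u := by
  have hD : 2*(u-1-Real.log u) ≠ 0 := ne_of_gt (by linarith [key_pos hu h1])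
  have hnum : HasDerivAt (fun x : ℝ => (x-1)^2) (2*(u-1)) u := by
    have := ((hasDerivAt_id u).sub_const 1).pow 2
    convert this using 1 <;> try rfl
    simp
  have hden : HasDerivAt (fun x : ℝ => 2*(x-1-Real.log x)) (2*(1 - u⁻¹)) u := by
    have := (((hasDerivAt_id u).sub_const 1).sub (Real.hasDerivAt_log (ne_of_gt hu))).const_mul 2
    convert this using 1 <;> rfl
  have h := hnum.div hden hD
  convert h using 1 <;> try rfl
  field_simp
  ring

lemma fF_mono_left : MonotoneOn fF (Set.Ioo 0 1) := by
  apply monotoneOn_of_deriv_nonneg (convex_Ioo 0 1)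
  · intro x hx
    exact ((fF_hasDeriv hx.1 (ne_of_lt hx.2)).continuousAt).continuousWithinAt
  · intro x hx
    rw [interior_Ioo] at hx
    exact (fF_hasDeriv hx.1 (ne_of_lt hx.2)).differentiableAt.differentiableWithinAt
  · intro x hx
    rw [interior_Ioo] at hx
    rw [(fF_hasDeriv hx.1 (ne_of_lt hx.2)).deriv]
    apply div_nonneg _ (sq_nonneg _)
    have h1 := ell_nonpos hx.1 (le_of_lt hx.2)
    nlinarith [hx.2]

lemma fF_mono_right : MonotoneOn fF (Set.Ioi 1) := by
  apply monotoneOn_of_deriv_nonneg (convex_Ioi 1)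
  · intro x hx
    exact ((fF_hasDeriv (lt_trans one_pos hx) (ne_of_gt hx)).continuousAt).continuousWithinAt
  · intro x hx
    rw [interior_Ioi] at hx
    exact (fF_hasDeriv (lt_trans one_pos hx) (ne_of_gt hx)).differentiableAt.differentiableWithinAt
  · intro x hx
    rw [interior_Ioi] at hx
    rw [(fF_hasDeriv (lt_trans one_pos hx) (ne_of_gt hx)).deriv]
    apply div_nonneg _ (sq_nonneg _)
    have h1 := ell_nonneg (le_of_lt hx)
    have hx1 : (1:ℝ) < x := hx
    nlinarith [mul_nonneg (show (0:ℝ) ≤ 2*(x-1) by linarith) h1]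

lemma fF_le_one {u : ℝ} (hu : 0 < u) (hu1 : u < 1) : fF u ≤ 1 := by
  have hD := key_pos hu (ne_of_lt hu1)
  rw [fF, div_le_one (by linarith)]
  exact psi_le hu (le_of_lt hu1)

lemma one_le_fF {u : ℝ} (hu : 1 < u) : 1 ≤ fF u := by
  have hD := key_pos (lt_trans one_pos hu) (ne_of_gt hu)
  rw [fF, le_div_iff₀ (by linarith)]
  simpa using psi_ge (le_of_lt hu)

noncomputable def gG : ℝ → ℝ := fun u => if u = 1 then 1 else fF u

lemma gG_le_one {u : ℝ} (hu : 0 < u) (hu1 : u ≤ 1) : gG u ≤ 1 := by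
  unfold gG
  rcases eq_or_lt_of_le hu1 with rfl | h
  · simp
  · rw [if_neg (ne_of_lt h)]
    exact fF_le_one hu h

lemma one_le_gG {u : ℝ} (hu : 1 ≤ u) : 1 ≤ gG u := by
  unfold gG
  rcases eq_or_lt_of_le hu with rfl | h
  · simp
  · rw [if_neg (ne_of_gt h)]
    exact one_le_fF h

lemma gG_mono : MonotoneOn gG (Set.Ioi 0) := by
  intro a ha b hb hab
  simp only [Set.mem_Ioi] at ha hb
  rcases eq_or_ne a 1 with rfl | ha1
  · have : gG 1 = 1 := by simp [gG]
    rw [this]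
    exact one_le_gG hab
  rcases eq_or_ne b 1 with rfl | hb1
  · have := gG_le_one ha hab
    simpa [gG] using this
  have hga : gG a = fF a := if_neg ha1
  have hgb : gG b = fF b := if_neg hb1
  rw [hga, hgb]
  rcases lt_or_gt_of_ne hb1 with hblt | hbgt
  · -- b < 1, hence a < 1
    exact fF_mono_left ⟨ha, lt_of_le_of_lt hab hblt⟩ ⟨hb, hblt⟩ hab
  rcases lt_or_gt_of_ne ha1 with halt | hagt
  · -- a < 1 < b
    exact le_trans (fF_le_one ha halt) (one_le_fF hbgt)
  · exact fF_mono_right hagt hbgt hab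

lemma h_eq_sqrt_gG {u : ℝ} (hu : 0 < u) :
    (if u = 1 then (1:ℝ) else |u - 1| / Real.sqrt (2 * (u - 1 - Real.log u)))
      = Real.sqrt (gG u) := by
  rcases eq_or_ne u 1 with rfl | h1
  · simp [gG]
  · rw [if_neg h1]
    unfold gG fF
    rw [if_neg h1, Real.sqrt_div (sq_nonneg _), Real.sqrt_sq_eq_abs]

/-- The function `h(u) = (u-1)/√(2(u - 1 - ln u))` (for `u ≠ 1`, with the sign convention
making it extendable by continuity at `u = 1`, where its value is `1`) is monotone
increasing on `(0, ∞)`. -/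
theorem h_monotone :
    MonotoneOn
      (fun u : ℝ => if u = 1 then 1 else |u - 1| / Real.sqrt (2 * (u - 1 - Real.log u)))
      (Set.Ioi (0 : ℝ)) := by
  intro a ha b hb hab
  simp only
  rw [h_eq_sqrt_gG ha, h_eq_sqrt_gG hb]
  exact Real.sqrt_le_sqrt (gG_mono ha hb hab)
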